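/- Let (A, ·) be an associative algebra over a field K, α : A → A an algebra endomorphism, and d : A → A a derivation (d(a·b) = d(a)·b + a·d(b)) with d∘d = 0 and d∘α = α∘d. Define two bilinear products on A by x ⊣ y = α(x)·d(α(y)) and x ⊢ y = d(α(x))·α(y). Then (A, ⊣, ⊢, α) is a hom-associative dialgebra: both products are hom-associative with respect to α, α is multiplicative for both products, and the three axioms α(x)⊣(y⊣z) = α(x)⊣(y⊢z), (x⊢y)⊣α(z) = α(x)⊢(y⊣z), and (x⊢y)⊢α(z) = (x⊣y)⊢α(z) hold for all x, y, z ∈ A. -/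
import Mathlib


/-- If `(A, ·)` is an associative algebra over a field `K`,
`α` an algebra endomorphism, and `d` a derivation with `d∘d = 0` and `d∘α = α∘d`,
then `x ⊣ y = α(x)·d(α(y))` and `x ⊢ y = d(α(x))·α(y)` make `(A, ⊣, ⊢, α)` a
hom-associative dialgebra. -/
theorem stmt_7 {K A : Type*} [Field K] [AddCommGroup A] [Module K A]
    (mul : A →ₗ[K] A →ₗ[K] A) (α d : A →ₗ[K] A)
    (hassoc : ∀ x y z : A, mul (mul x y) z = mul x (mul y z))
    (hα : ∀ x y : A, α (mul x y) = mul (α x) (α y))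
    (hd : ∀ x y : A, d (mul x y) = mul (d x) y + mul x (d y))
    (hd2 : ∀ x : A, d (d x) = 0)
    (hdα : ∀ x : A, d (α x) = α (d x)) :
    let dv : A → A → A := fun x y => mul (α x) (d (α y))   -- x ⊣ y
    let vd : A → A → A := fun x y => mul (d (α x)) (α y)   -- x ⊢ y
    -- both products are hom-associative with respect to α
    (∀ x y z : A, dv (α x) (dv y z) = dv (dv x y) (α z)) ∧
    (∀ x y z : A, vd (α x) (vd y z) = vd (vd x y) (α z)) ∧
    -- α is multiplicative for both products
    (∀ x y : A, α (dv x y) = dv (α x) (α y)) ∧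
    (∀ x y : A, α (vd x y) = vd (α x) (α y)) ∧
    -- the three dialgebra axioms
    (∀ x y z : A, dv (α x) (dv y z) = dv (α x) (vd y z)) ∧
    (∀ x y z : A, dv (vd x y) (α z) = vd (α x) (dv y z)) ∧
    (∀ x y z : A, vd (vd x y) (α z) = vd (dv x y) (α z)) := by
  intro dv vd
  refine ⟨?_, ?_, ?_, ?_, ?_, ?_, ?_⟩ <;> intros <;>
    simp only [dv, vd, hα, hd, hdα, hd2, map_zero, map_add, LinearMap.add_apply,
      LinearMap.zero_apply, add_zero, zero_add, hassoc]
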